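/- Let X be a δ-hyperbolic graph, θ ≥ 0, and c a vertex with vertices x, y. If the angle at c between x and y is greater than θ + 12δ, then for every choice of edges ε1, ε2 at c starting geodesics from c to x and from c to y respectively, the angle at c between ε1 and the reverse of ε2 is at least θ. -/

import Mathlib

/-- A graph: vertices, oriented edges, origin/terminus maps, and a
fixed-point-free edge-reversing involution. -/
structure MGraph where
  V : Type
  E : Type
  o : E → V
  t : E → V
  rev : E → E
  rev_o : ∀ e, o (rev e) = t e
  rev_t : ∀ e, t (rev e) = o e
  rev_rev : ∀ e, rev (rev e) = e
  rev_ne : ∀ e, rev e ≠ e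

namespace MGraph

variable (X : MGraph)

/-- A walk from `x` to `y` given by a list of consecutive edges. -/
def IsWalk : List X.E → X.V → X.V → Prop
  | [], x, y => x = y
  | e :: es, x, y => X.o e = x ∧ IsWalk es (X.t e) y

/-- The vertices visited by a walk starting at `x`. -/
def walkVerts : X.V → List X.E → List X.V
  | x, [] => [x]
  | x, e :: es => x :: walkVerts (X.t e) es

/-- The graph metric (length of each edge is 1), valued in `ℕ∞`. -/
noncomputable def dist (x y : X.V) : ℕ∞ :=
  sInf {n : ℕ∞ | ∃ es, X.IsWalk es x y ∧ (es.length : ℕ∞) = n}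

/-- The distance from `x` to `y` in the graph with the vertex `v` removed. -/
noncomputable def delDist (v x y : X.V) : ℕ∞ :=
  sInf {n : ℕ∞ | ∃ es, X.IsWalk es x y ∧ v ∉ X.walkVerts x es ∧ (es.length : ℕ∞) = n}

/-- The angle at `v = t e1 = o e2` between two edges `e1, e2`: the distance
from `o e1` to `t e2` in the graph with the vertex `t e1` removed. -/
noncomputable def angle (e1 e2 : X.E) : ℕ∞ :=
  X.delDist (X.t e1) (X.o e1) (X.t e2)

/-- A geodesic is a walk whose length realizes the distance. -/
def IsGeodesic (es : List X.E) (x y : X.V) : Prop :=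
  X.IsWalk es x y ∧ (es.length : ℕ∞) = X.dist x y

/-- `∠_c(x1,x2) > θ` : there are edges `e1, e2` with `t e1 = o e2 = c`, each
lying on a geodesic between `c` and `x_i`, making an angle `> θ` at `c`. -/
def AngleGT (c x1 x2 : X.V) (θ : ℕ∞) : Prop :=
  ∃ (e1 e2 : X.E) (es1 es2 : List X.E), X.t e1 = c ∧ X.o e2 = c ∧
    X.IsGeodesic (X.rev e1 :: es1) c x1 ∧ X.IsGeodesic (e2 :: es2) c x2 ∧
    θ < X.angle e1 e2

/-- All pairs of consecutive edges of a walk make an angle at most `θ`. -/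
def AngleBounded (θ : ℕ∞) : List X.E → Prop
  | [] => True
  | [_] => True
  | e :: e' :: es => X.angle e e' ≤ θ ∧ AngleBounded θ (e' :: es)

/-- `v` is a vertex of the cone of parameter `θ` around the oriented edge `e`:
it lies on a path starting at `o e` by the edge `e`, of length at most `θ`,
whose consecutive edges make angles at most `θ`. -/
def InConeV (θ : ℕ∞) (e : X.E) (v : X.V) : Prop :=
  ∃ (es : List X.E) (y : X.V), X.IsWalk (e :: es) (X.o e) y ∧
    ((e :: es).length : ℕ∞) ≤ θ ∧ X.AngleBounded θ (e :: es) ∧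
    v ∈ X.walkVerts (X.o e) (e :: es)

/-- `ε` is an edge of the cone of parameter `θ` around the oriented edge `e`. -/
def InConeE (θ : ℕ∞) (e ε : X.E) : Prop :=
  ∃ (es : List X.E) (y : X.V), X.IsWalk (e :: es) (X.o e) y ∧
    ((e :: es).length : ℕ∞) ≤ θ ∧ X.AngleBounded θ (e :: es) ∧
    (ε ∈ e :: es ∨ X.rev ε ∈ e :: es)

/-- A graph is fine if for each edge `e` and each `L`, only finitely many
edges arrive at `o e` making an angle at most `L` with `e`. -/
def Fine : Prop :=
  ∀ (e : X.E) (L : ℕ), {e' : X.E | X.t e' = X.o e ∧ X.angle e' e ≤ (L : ℕ∞)}.Finite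

/-- δ-hyperbolicity: geodesic triangles are δ-thin. -/
def Hyperbolic (δ : ℕ) : Prop :=
  ∀ (a b c : X.V) (p q r : List X.E),
    X.IsGeodesic p a b → X.IsGeodesic q b c → X.IsGeodesic r a c →
    ∀ v ∈ X.walkVerts a p, ∃ w, (w ∈ X.walkVerts b q ∨ w ∈ X.walkVerts a r) ∧
      X.dist v w ≤ (δ : ℕ∞)

/-- The four point inequality form of δ-hyperbolicity. -/
def FourPoint (δ : ℕ) : Prop :=
  ∀ a x y y' : X.V,
    X.dist a x + X.dist y y' ≤
      max (X.dist a y + X.dist y' x) (X.dist a y' + X.dist y x) + (δ : ℕ∞)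

/-- Connectedness. -/
def Connected : Prop := ∀ x y : X.V, ∃ es, X.IsWalk es x y

/-- `t` is on an `α`-geodesic between `x` and `a`. -/
def OnAlphaGeod (α : ℕ∞) (t x a : X.V) : Prop :=
  X.dist x t + X.dist t a ≤ X.dist x a + α

/-- The set `𝓔_{a,x}(ρ)` of edges at distance `ρ` from `a` lying on
geodesics between `a` and `x`. -/
def GeodEdgeAt (a x : X.V) (ρ : ℕ∞) (e : X.E) : Prop :=
  X.dist a (X.o e) = ρ ∧ ∃ es, (X.IsGeodesic es a x ∨ X.IsGeodesic es x a) ∧ e ∈ es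

/-- The set `U_α[a,x]` of points on `α`-conical-geodesics between `x` and `a`. -/
def ConicalSet (α : ℕ) (a x : X.V) : Set X.V :=
  {t | X.OnAlphaGeod (α : ℕ∞) t x a ∧ X.dist a t ≤ X.dist a x ∧
       ∀ e, X.GeodEdgeAt a x (X.dist a t) e → X.InConeV ((40 * α : ℕ) : ℕ∞) e t}

variable {X}

/-- End vertex of a walk starting at `x`. -/
def wEnd (X : MGraph) : X.V → List X.E → X.V
  | x, [] => x
  | _, e :: es => X.wEnd (X.t e) es

@[simp] lemma wEnd_nil (x : X.V) : X.wEnd x [] = x := rfl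
@[simp] lemma wEnd_cons (x : X.V) (e : X.E) (es : List X.E) :
    X.wEnd x (e :: es) = X.wEnd (X.t e) es := rfl

lemma IsWalk.wEnd_eq : ∀ {es : List X.E} {x y : X.V}, X.IsWalk es x y → y = X.wEnd x es
  | [], _, _, h => h.symm
  | _ :: _, _, _, h => by
      simpa using IsWalk.wEnd_eq h.2

lemma isWalk_append {es fs : List X.E} {x z : X.V} :
    X.IsWalk (es ++ fs) x z ↔ X.IsWalk es x (X.wEnd x es) ∧ X.IsWalk fs (X.wEnd x es) z := by
  induction es generalizing x with
  | nil => simp [IsWalk]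
  | cons e es ih => simp [IsWalk, ih, and_assoc]

lemma walkVerts_ne_nil {x : X.V} {es : List X.E} : X.walkVerts x es ≠ [] := by
  cases es <;> simp [walkVerts]

lemma self_mem_walkVerts {x : X.V} {es : List X.E} : x ∈ X.walkVerts x es := by
  cases es <;> simp [walkVerts]

lemma mem_walkVerts {v : X.V} : ∀ {es : List X.E} {x : X.V},
    v ∈ X.walkVerts x es ↔ ∃ l1 l2 : List X.E, es = l1 ++ l2 ∧ v = X.wEnd x l1 := by
  intro es
  induction es with
  | nil =>
    intro x
    constructor
    · intro h
      exact ⟨[], [], rfl, by simpa [walkVerts] using h⟩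
    · rintro ⟨l1, l2, h, rfl⟩
      obtain rfl : l1 = [] := by cases l1 <;> simp_all
      simp [walkVerts]
  | cons e es ih =>
    intro x
    constructor
    · intro h
      rcases List.mem_cons.mp h with h | h
      · exact ⟨[], e :: es, rfl, h⟩
      · obtain ⟨l1, l2, rfl, rfl⟩ := ih.mp h
        exact ⟨e :: l1, l2, rfl, by simp⟩
    · rintro ⟨l1, l2, hl, rfl⟩
      cases l1 with
      | nil => simpa [walkVerts] using Or.inl rfl
      | cons a l1' =>
        obtain ⟨rfl, rfl⟩ : e = a ∧ es = l1' ++ l2 := by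
          simpa using hl
        simp only [wEnd_cons, walkVerts]
        exact List.mem_cons.mpr (Or.inr (ih.mpr ⟨l1', l2, rfl, rfl⟩))

lemma mem_walkVerts_append {v : X.V} : ∀ {es : List X.E} {fs : List X.E} {x : X.V},
    v ∈ X.walkVerts x (es ++ fs) ↔
      v ∈ X.walkVerts x es ∨ v ∈ X.walkVerts (X.wEnd x es) fs := by
  intro es
  induction es with
  | nil =>
    intro fs x
    constructor
    · intro h; exact Or.inr (by simpa using h)
    · rintro (h | h)
      · simp only [walkVerts, List.mem_singleton] at h
        subst h
        simpa using self_mem_walkVerts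
      · simpa using h
  | cons e es ih =>
    intro fs x
    simp [walkVerts, ih, or_assoc]

lemma walkVerts_append (x : X.V) (es fs : List X.E) :
    X.walkVerts x (es ++ fs) =
      (X.walkVerts x es).dropLast ++ X.walkVerts (X.wEnd x es) fs := by
  induction es generalizing x with
  | nil => simp [walkVerts]
  | cons e es ih =>
    rw [List.cons_append]
    show (x :: X.walkVerts (X.t e) (es ++ fs)) = _
    rw [ih]
    rw [show X.walkVerts x (e :: es) = x :: X.walkVerts (X.t e) es from rfl,
        List.dropLast_cons_of_ne_nil walkVerts_ne_nil, wEnd_cons, List.cons_append]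

/-- The reverse of a walk. -/
def revWalk (X : MGraph) (es : List X.E) : List X.E := (es.reverse).map X.rev

@[simp] lemma revWalk_nil : X.revWalk [] = [] := rfl

lemma revWalk_cons (e : X.E) (es : List X.E) :
    X.revWalk (e :: es) = X.revWalk es ++ [X.rev e] := by simp [revWalk]

@[simp] lemma revWalk_length (es : List X.E) : (X.revWalk es).length = es.length := by
  simp [revWalk]

lemma isWalk_revWalk : ∀ {es : List X.E} {x y : X.V}, X.IsWalk es x y →
    X.IsWalk (X.revWalk es) y x ∧
      X.walkVerts y (X.revWalk es) = (X.walkVerts x es).reverse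
  | [], x, y, h => by
      obtain rfl : x = y := h
      simp [walkVerts, IsWalk]
  | e :: es, x, y, h => by
      obtain ⟨he, hw⟩ := h
      obtain ⟨ihw, ihv⟩ := isWalk_revWalk hw
      have hend : X.wEnd y (X.revWalk es) = X.t e := (ihw.wEnd_eq).symm
      constructor
      · rw [revWalk_cons, isWalk_append, hend]
        exact ⟨ihw, X.rev_o e, by simpa [IsWalk, X.rev_t] using he⟩
      · rw [revWalk_cons, walkVerts_append, hend, ihv]
        have hL : X.walkVerts (X.t e) es = X.t e :: (X.walkVerts (X.t e) es).tail := by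
          cases es <;> simp [walkVerts]
        show _ = (x :: X.walkVerts (X.t e) es).reverse
        rw [hL]
        simp [walkVerts, X.rev_t, he]

lemma dist_le_length {es : List X.E} {x y : X.V} (h : X.IsWalk es x y) :
    X.dist x y ≤ (es.length : ℕ∞) := sInf_le ⟨es, h, rfl⟩

@[simp] lemma dist_self (x : X.V) : X.dist x x = 0 :=
  le_antisymm (by simpa using dist_le_length (show X.IsWalk [] x x from rfl)) zero_le

lemma dist_le_iff {x y : X.V} {k : ℕ} :
    X.dist x y ≤ (k : ℕ∞) ↔ ∃ es, X.IsWalk es x y ∧ es.length ≤ k := by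
  constructor
  · intro h
    by_contra hc
    push_neg at hc
    have h1 : ((k : ℕ∞) + 1) ≤ X.dist x y := by
      apply le_sInf
      rintro n ⟨es, hw, rfl⟩
      have := hc es hw
      exact_mod_cast this
    have h2 : ((k : ℕ∞) + 1) ≤ (k : ℕ∞) := le_trans h1 h
    have : (k : ℕ∞) < (k : ℕ∞) + 1 := by
      exact_mod_cast Nat.lt_succ_self k
    exact absurd h2 (not_le.mpr this)
  · rintro ⟨es, hw, hl⟩
    exact le_trans (dist_le_length hw) (by exact_mod_cast hl)

lemma dist_comm (x y : X.V) : X.dist x y = X.dist y x := by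
  have key : ∀ a b : X.V, X.dist a b ≤ X.dist b a := by
    intro a b
    apply le_sInf
    rintro n ⟨es, hw, rfl⟩
    have := (isWalk_revWalk hw).1
    simpa using dist_le_length this
  exact le_antisymm (key x y) (key y x)

lemma dist_triangle (x y z : X.V) : X.dist x z ≤ X.dist x y + X.dist y z := by
  rcases eq_or_ne (X.dist x y) ⊤ with h1 | h1
  · simp [h1]
  rcases eq_or_ne (X.dist y z) ⊤ with h2 | h2
  · simp [h2]
  lift X.dist x y to ℕ using h1 with a ha
  lift X.dist y z to ℕ using h2 with b hb
  obtain ⟨es, hw1, hl1⟩ := dist_le_iff.mp ha.ge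
  obtain ⟨fs, hw2, hl2⟩ := dist_le_iff.mp hb.ge
  have hw : X.IsWalk (es ++ fs) x z := by
    rw [isWalk_append, ← hw1.wEnd_eq]
    exact ⟨hw1, hw2⟩
  refine le_trans (dist_le_length hw) ?_
  have : (es ++ fs).length ≤ a + b := by
    simp only [List.length_append]; omega
  exact_mod_cast this


lemma delDist_le_length {c x y : X.V} {es : List X.E} (h : X.IsWalk es x y)
    (hc : c ∉ X.walkVerts x es) : X.delDist c x y ≤ (es.length : ℕ∞) :=
  sInf_le ⟨es, h, hc, rfl⟩

lemma delDist_le_iff {c x y : X.V} {k : ℕ} :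
    X.delDist c x y ≤ (k : ℕ∞) ↔
      ∃ es, X.IsWalk es x y ∧ c ∉ X.walkVerts x es ∧ es.length ≤ k := by
  constructor
  · intro h
    by_contra hc
    push_neg at hc
    have h1 : ((k : ℕ∞) + 1) ≤ X.delDist c x y := by
      apply le_sInf
      rintro n ⟨es, hw, hv, rfl⟩
      have := hc es hw hv
      exact_mod_cast this
    have h2 : ((k : ℕ∞) + 1) ≤ (k : ℕ∞) := le_trans h1 h
    have : (k : ℕ∞) < (k : ℕ∞) + 1 := by
      exact_mod_cast Nat.lt_succ_self k
    exact absurd h2 (not_le.mpr this)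
  · rintro ⟨es, hw, hc, hl⟩
    exact le_trans (delDist_le_length hw hc) (by exact_mod_cast hl)

lemma delDist_comm (c x y : X.V) : X.delDist c x y = X.delDist c y x := by
  have key : ∀ a b : X.V, X.delDist c a b ≤ X.delDist c b a := by
    intro a b
    apply le_sInf
    rintro n ⟨es, hw, hv, rfl⟩
    obtain ⟨hw', hv'⟩ := isWalk_revWalk hw
    have : c ∉ X.walkVerts a (X.revWalk es) := by
      rw [show a = X.wEnd b es from hw.wEnd_eq] at hv' ⊢
      rw [hv']
      simpa using hv
    simpa using delDist_le_length hw' this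
  exact le_antisymm (key x y) (key y x)

lemma delDist_triangle (c x y z : X.V) :
    X.delDist c x z ≤ X.delDist c x y + X.delDist c y z := by
  rcases eq_or_ne (X.delDist c x y) ⊤ with h1 | h1
  · simp [h1]
  rcases eq_or_ne (X.delDist c y z) ⊤ with h2 | h2
  · simp [h2]
  lift X.delDist c x y to ℕ using h1 with a ha
  lift X.delDist c y z to ℕ using h2 with b hb
  obtain ⟨es, hw1, hc1, hl1⟩ := delDist_le_iff.mp ha.ge
  obtain ⟨fs, hw2, hc2, hl2⟩ := delDist_le_iff.mp hb.ge
  have hend : y = X.wEnd x es := hw1.wEnd_eq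
  have hw : X.IsWalk (es ++ fs) x z := by
    rw [isWalk_append, ← hend]
    exact ⟨hw1, hw2⟩
  have hcc : c ∉ X.walkVerts x (es ++ fs) := by
    rw [mem_walkVerts_append, ← hend]
    rintro (h | h)
    · exact hc1 h
    · exact hc2 h
  refine le_trans (delDist_le_length hw hcc) ?_
  have : (es ++ fs).length ≤ a + b := by
    simp only [List.length_append]; omega
  exact_mod_cast this

lemma IsGeodesic.split {es fs : List X.E} {x z : X.V}
    (h : X.IsGeodesic (es ++ fs) x z) :
    X.IsGeodesic es x (X.wEnd x es) ∧ X.IsGeodesic fs (X.wEnd x es) z := by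
  obtain ⟨h1, h2⟩ := isWalk_append.mp h.1
  have d1 := dist_le_length h1
  have d2 := dist_le_length h2
  have tri := dist_triangle x (X.wEnd x es) z
  have dtot : X.dist x z = ((es.length + fs.length : ℕ) : ℕ∞) := by
    rw [← h.2]; simp
  have hne1 : X.dist x (X.wEnd x es) ≠ ⊤ :=
    (lt_of_le_of_lt d1 (WithTop.coe_lt_top _)).ne
  have hne2 : X.dist (X.wEnd x es) z ≠ ⊤ :=
    (lt_of_le_of_lt d2 (WithTop.coe_lt_top _)).ne
  lift X.dist x (X.wEnd x es) to ℕ using hne1 with a ha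
  lift X.dist (X.wEnd x es) z to ℕ using hne2 with b hb
  have hd1 : a ≤ es.length := by exact_mod_cast d1
  have hd2 : b ≤ fs.length := by exact_mod_cast d2
  have htri : es.length + fs.length ≤ a + b := by
    rw [dtot] at tri
    exact_mod_cast tri
  have e1 : a = es.length := by omega
  have e2 : b = fs.length := by omega
  exact ⟨⟨h1, by rw [← ha]; exact_mod_cast e1.symm⟩,
    ⟨h2, by rw [← hb]; exact_mod_cast e2.symm⟩⟩

/-- On a geodesic starting with edge `e` from `a`, no later vertex equals `a`. -/
lemma geod_avoid {e : X.E} {l1 l2 : List X.E} {a b : X.V}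
    (h : X.IsGeodesic (e :: (l1 ++ l2)) a b) : a ∉ X.walkVerts (X.t e) l1 := by
  intro hv
  obtain ⟨u1, u2, rfl, hveq⟩ := mem_walkVerts.mp hv
  have h' : X.IsGeodesic ((e :: u1) ++ (u2 ++ l2)) a b := by simpa using h
  have hg := (IsGeodesic.split h').1
  have hd := hg.2
  rw [show X.wEnd a (e :: u1) = X.wEnd (X.t e) u1 from rfl, ← hveq, dist_self] at hd
  simp at hd

/-- Initial edges of two geodesics from `c` to `x` make angle at most `6δ`. -/
lemma six {δ : ℕ} (hδpos : 0 < δ) (hδ : X.Hyperbolic δ) {c x : X.V}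
    {e f : X.E} {es fs : List X.E}
    (hp : X.IsGeodesic (e :: es) c x) (hq : X.IsGeodesic (f :: fs) c x) :
    X.delDist c (X.t e) (X.t f) ≤ ((6 * δ : ℕ) : ℕ∞) := by
  have hlen : fs.length = es.length := by
    have h1 : (((e :: es).length : ℕ) : ℕ∞) = (((f :: fs).length : ℕ) : ℕ∞) := by
      rw [hp.2, hq.2]
    have h2 : (e :: es).length = (f :: fs).length := by exact_mod_cast h1
    simpa using h2.symm
  have hpe : X.IsWalk es (X.t e) x := hp.1.2
  have hqf : X.IsWalk fs (X.t f) x := hq.1.2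
  by_cases hn : es.length ≤ 3 * δ
  · -- short case : go to x along p, return along q
    obtain ⟨hrw, hrv⟩ := isWalk_revWalk hqf
    have hend : X.wEnd (X.t e) es = x := hpe.wEnd_eq.symm
    have hw : X.IsWalk (es ++ X.revWalk fs) (X.t e) (X.t f) := by
      rw [isWalk_append, hend]
      exact ⟨hpe, hrw⟩
    have hc : c ∉ X.walkVerts (X.t e) (es ++ X.revWalk fs) := by
      rw [mem_walkVerts_append, hend]
      rintro (hmem | hmem)
      · exact geod_avoid (l2 := []) (by simpa using hp) hmem
      · rw [hrv, List.mem_reverse] at hmem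
        exact geod_avoid (l2 := []) (by simpa using hq) hmem
    refine delDist_le_iff.mpr ⟨_, hw, hc, ?_⟩
    simp only [List.length_append, revWalk_length]
    omega
  · -- long case
    push_neg at hn
    have htake : (es.take (2 * δ)).length = 2 * δ := by
      rw [List.length_take]; omega
    have hsplit : X.IsGeodesic ((e :: es.take (2 * δ)) ++ es.drop (2 * δ)) c x := by
      rw [List.cons_append, List.take_append_drop]
      exact hp
    obtain ⟨hg1, hg2⟩ := IsGeodesic.split hsplit
    set v := X.wEnd c (e :: es.take (2 * δ)) with hvdef
    have hdcv : X.dist c v = ((2 * δ + 1 : ℕ) : ℕ∞) := by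
      rw [← hg1.2]
      norm_cast
      simp [htake]
    have hdvx : X.dist v x = ((es.length - 2 * δ : ℕ) : ℕ∞) := by
      rw [← hg2.2]
      norm_cast
      simp [List.length_drop]
    have hvmem : v ∈ X.walkVerts c (e :: es) := by
      refine mem_walkVerts.mpr ⟨e :: es.take (2 * δ), es.drop (2 * δ), ?_, rfl⟩
      rw [List.cons_append, List.take_append_drop]
    have hgeo0 : X.IsGeodesic [] x x := ⟨rfl, by simp [dist_self]⟩
    obtain ⟨w, hwmem, hdvw⟩ := hδ c x x (e :: es) [] (f :: fs) hp hgeo0 hq v hvmem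
    rcases hwmem with hwmem | hwmem
    · -- w = x : impossible, v is far from x
      obtain rfl : w = x := by simpa [walkVerts] using hwmem
      rw [hdvx] at hdvw
      have hcon : es.length - 2 * δ ≤ δ := by exact_mod_cast hdvw
      exact absurd hcon (by omega)
    · obtain ⟨m1, m2, hm, hwend⟩ := mem_walkVerts.mp hwmem
      have hqsplit : X.IsGeodesic (m1 ++ m2) c x := by rw [← hm]; exact hq
      obtain ⟨hg3, _⟩ := IsGeodesic.split hqsplit
      have hdcw : X.dist c w = ((m1.length : ℕ) : ℕ∞) := by
        rw [hwend]; exact hg3.2.symm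
      -- upper bound on m1.length
      have hub : m1.length ≤ 3 * δ + 1 := by
        have h1 : X.dist c w ≤ X.dist c v + X.dist v w := dist_triangle c v w
        rw [hdcw, hdcv] at h1
        have h2 : ((m1.length : ℕ) : ℕ∞) ≤ ((2 * δ + 1 + δ : ℕ) : ℕ∞) := by
          refine le_trans h1 ?_
          push_cast
          exact add_le_add_right hdvw _
        have := (Nat.cast_le (α := ℕ∞)).mp h2
        omega
      have hlb : δ + 1 ≤ m1.length := by
        have h1 : X.dist c v ≤ X.dist c w + X.dist w v := dist_triangle c w v
        rw [hdcw, hdcv, dist_comm w v] at h1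
        have h2 : ((2 * δ + 1 : ℕ) : ℕ∞) ≤ ((m1.length + δ : ℕ) : ℕ∞) := by
          refine le_trans h1 ?_
          push_cast
          exact add_le_add_right hdvw _
        have := (Nat.cast_le (α := ℕ∞)).mp h2
        omega
      -- m1 is nonempty, starting with f
      obtain ⟨m1', rfl, hfs⟩ : ∃ m1', m1 = f :: m1' ∧ fs = m1' ++ m2 := by
        cases m1 with
        | nil => simp at hlb
        | cons a m1' =>
          obtain ⟨rfl, rfl⟩ : f = a ∧ fs = m1' ++ m2 := by simpa using hm
          exact ⟨m1', rfl, rfl⟩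
      have hwend' : w = X.wEnd (X.t f) m1' := hwend
      -- walk A : from t e to v along p
      have hwA : X.IsWalk (es.take (2 * δ)) (X.t e) v := hg1.1.2
      have hcA : c ∉ X.walkVerts (X.t e) (es.take (2 * δ)) := by
        have hp' : X.IsGeodesic (e :: (es.take (2 * δ) ++ es.drop (2 * δ))) c x := by
          rw [List.take_append_drop]; exact hp
        exact geod_avoid hp'
      -- walk B : from v to w
      obtain ⟨bs, hbw, hbl⟩ := dist_le_iff.mp hdvw
      have hcB : c ∉ X.walkVerts v bs := by
        intro hmem
        obtain ⟨b1, b2, rfl, hce⟩ := mem_walkVerts.mp hmem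
        have hwb1 : X.IsWalk b1 v (X.wEnd v b1) := (isWalk_append.mp hbw).1
        have h1 : X.dist v c ≤ ((b1.length : ℕ) : ℕ∞) := by
          rw [hce]; exact dist_le_length hwb1
        rw [dist_comm v c, hdcv] at h1
        have h2 : 2 * δ + 1 ≤ b1.length := by exact_mod_cast h1
        have h3 : (b1 ++ b2).length ≤ δ := hbl
        simp only [List.length_append] at h3
        omega
      -- walk C : from w back to t f along q
      have hfw : X.IsWalk m1' (X.t f) (X.wEnd (X.t f) m1') := by
        rw [hfs] at hqf
        exact (isWalk_append.mp hqf).1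
      rw [← hwend'] at hfw
      obtain ⟨hrwC, hrvC⟩ := isWalk_revWalk hfw
      have hcC : c ∉ X.walkVerts w (X.revWalk m1') := by
        rw [hrvC, List.mem_reverse]
        have hq' : X.IsGeodesic (f :: (m1' ++ m2)) c x := by
          rw [← hfs]; exact hq
        exact geod_avoid hq'
      -- assemble
      have hendA : X.wEnd (X.t e) (es.take (2 * δ)) = v := hwA.wEnd_eq.symm
      have hendB : X.wEnd v bs = w := hbw.wEnd_eq.symm
      have hwalk : X.IsWalk (es.take (2 * δ) ++ (bs ++ X.revWalk m1'))
          (X.t e) (X.t f) := by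
        rw [isWalk_append, hendA]
        refine ⟨hwA, ?_⟩
        rw [isWalk_append, hendB]
        exact ⟨hbw, hrwC⟩
      have hcW : c ∉ X.walkVerts (X.t e) (es.take (2 * δ) ++ (bs ++ X.revWalk m1')) := by
        rw [mem_walkVerts_append, hendA, mem_walkVerts_append, hendB]
        rintro (hmem | hmem | hmem)
        · exact hcA hmem
        · exact hcB hmem
        · exact hcC hmem
      refine delDist_le_iff.mpr ⟨_, hwalk, hcW, ?_⟩
      simp only [List.length_append, revWalk_length]
      have hm1' : m1'.length + 1 ≤ 3 * δ + 1 := by simpa using hub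
      omega
end MGraph

/-- if `∠_c(x,y) > θ + 12δ`, then for every choice of edges
`ε1, ε2` at `c` starting geodesics to `x` and to `y`, the angle at `c` between
`ε1` and the reverse of `ε2` is at least `θ`. -/
theorem stmt_3 (X : MGraph) (δ θ : ℕ) (hδpos : 0 < δ) (hδ : X.Hyperbolic δ)
    (c x y : X.V) (h : X.AngleGT c x y ((θ + 12 * δ : ℕ) : ℕ∞)) :
    ∀ (ε1 ε2 : X.E) (es1 es2 : List X.E),
      X.IsGeodesic (ε1 :: es1) c x → X.IsGeodesic (ε2 :: es2) c y →
      (θ : ℕ∞) ≤ X.angle (X.rev ε2) ε1 := by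

  intro ε1 ε2 es1 es2 hg1 hg2
  obtain ⟨e1, e2, ges1, ges2, ht1, ho2, hge1, hge2, hang⟩ := h
  have hoε2 : X.o ε2 = c := hg2.1.1
  have hA : X.angle (X.rev ε2) ε1 = X.delDist c (X.t ε2) (X.t ε1) := by
    unfold MGraph.angle
    rw [X.rev_t, X.rev_o, hoε2]
  have hD : X.angle e1 e2 = X.delDist c (X.o e1) (X.t e2) := by
    unfold MGraph.angle
    rw [ht1]
  rw [hD] at hang
  have s1 : X.delDist c (X.o e1) (X.t ε1) ≤ ((6 * δ : ℕ) : ℕ∞) := by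
    have := MGraph.six hδpos hδ hge1 hg1
    rwa [X.rev_t] at this
  have s2 : X.delDist c (X.t ε2) (X.t e2) ≤ ((6 * δ : ℕ) : ℕ∞) :=
    MGraph.six hδpos hδ hg2 hge2
  have chain : X.delDist c (X.o e1) (X.t e2) ≤
      ((6 * δ : ℕ) : ℕ∞) + (X.delDist c (X.t ε2) (X.t ε1) + ((6 * δ : ℕ) : ℕ∞)) := by
    refine le_trans (MGraph.delDist_triangle c _ (X.t ε1) _) ?_
    refine add_le_add s1 ?_
    refine le_trans (MGraph.delDist_triangle c _ (X.t ε2) _) ?_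
    rw [MGraph.delDist_comm c (X.t ε1) (X.t ε2)]
    exact add_le_add le_rfl s2
  rw [hA]
  rcases eq_or_ne (X.delDist c (X.t ε2) (X.t ε1)) ⊤ with hT | hT
  · rw [hT]; exact le_top
  lift X.delDist c (X.t ε2) (X.t ε1) to ℕ using hT with a ha
  have hlt : ((θ + 12 * δ : ℕ) : ℕ∞) < ((6 * δ + (a + 6 * δ) : ℕ) : ℕ∞) := by
    refine lt_of_lt_of_le hang (le_trans chain ?_)
    push_cast
    exact le_rfl
  have hnat : θ + 12 * δ < 6 * δ + (a + 6 * δ) := by exact_mod_cast hlt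
  exact_mod_cast (by omega : θ ≤ a)
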